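/- Let f be convex piecewise affine, and let g_{j-1}, g_j be two consecutive affine pieces of a concave function, with slopes g'_{j-1} > g'_j, where g_{j-1} is defined on [c_{j-1}, c_j] and g_j on [c_j, c_{j+1}]. Let α_j = min{ a_i in the decomposition of f : f'_i ≥ g'_j } and α_{j-1} = min{ a_i : f'_i ≥ g'_{j-1} }. Then for all x ≤ c_j + α_j, (f * g_j)(x) ≥ (f * g_{j-1})(x), and for all x ≥ c_j + α_{j-1}, (f * g_{j-1})(x) ≥ (f * g_j)(x). -/

import Mathlib

/-- If `H` is monotone on each piece `[a i, a (i+1)]` for indices between `j` and `k`,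
then it is monotone on `[a j, a k]`. -/
lemma monoOn_pieces_aux {n : ℕ} (a : Fin (n + 1) → ℝ) (ha : StrictMono a) (H : ℝ → ℝ)
    (j k : Fin (n + 1)) (hjk : j ≤ k)
    (hH : ∀ i : Fin n, j ≤ i.castSucc → i.succ ≤ k →
      MonotoneOn H (Set.Icc (a i.castSucc) (a i.succ))) :
    MonotoneOn H (Set.Icc (a j) (a k)) := by
  obtain ⟨m, hm⟩ : ∃ m, (k : ℕ) = (j : ℕ) + m := ⟨(k : ℕ) - (j : ℕ), by
    have := Fin.le_def.mp hjk; omega⟩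
  clear hjk
  induction m generalizing k with
  | zero =>
    have hk : j = k := Fin.ext (by omega)
    subst hk
    intro u hu v hv _
    have : u = v := le_antisymm (le_trans hu.2 hv.1) (le_trans hv.2 hu.1)
    exact le_of_eq (by rw [this])
  | succ m ih =>
    have hkpos : 1 ≤ (k : ℕ) := by omega
    have hkn : (k : ℕ) ≤ n := by omega
    have hin : (k : ℕ) - 1 < n := by omega
    set i : Fin n := ⟨(k : ℕ) - 1, hin⟩ with hi
    have hics : (i.castSucc : ℕ) = (k : ℕ) - 1 := rfl
    have hisucc : i.succ = k := Fin.ext (by simp only [Fin.val_succ, hi]; omega)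
    have h1 : MonotoneOn H (Set.Icc (a j) (a i.castSucc)) := by
      refine ih i.castSucc (fun i' h1 h2 => hH i' h1 (le_trans h2 ?_)) (by
        rw [hics]; omega)
      exact Fin.le_def.mpr (by rw [hics]; omega)
    have h2 : MonotoneOn H (Set.Icc (a i.castSucc) (a i.succ)) :=
      hH i (Fin.le_def.mpr (by rw [hics]; omega)) (le_of_eq hisucc)
    have hja : a j ≤ a i.castSucc := ha.monotone (Fin.le_def.mpr (by rw [hics]; omega))
    have hak : a i.castSucc ≤ a i.succ := le_of_lt (ha (Fin.castSucc_lt_succ (i := i)))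
    have := h1.union_right h2 (isGreatest_Icc hja) (isLeast_Icc hak)
    rw [Set.Icc_union_Icc_eq_Icc hja hak, hisucc] at this
    exact this

/-- Comparison of the convolutions of a convex piecewise-affine function `f` with two
consecutive affine pieces `g_{j-1}` (slope `s₁` on `[c₁,c₂]`) and `g_j` (slope
`s₂ < s₁` on `[c₂,c₃]`) of a concave function: with
`α₁ = min { a_i : f'_i ≥ s₁ }` and `α₂ = min { a_i : f'_i ≥ s₂ }`, one has
`f * g_j ≥ f * g_{j-1}` for `x ≤ c₂ + α₂` and `f * g_{j-1} ≥ f * g_j` for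
`x ≥ c₂ + α₁`. -/
theorem minplus_convolution_consecutive_pieces (n : ℕ) (hn : 0 < n)
    (a : Fin (n + 1) → ℝ) (ha : StrictMono a)
    (r : Fin n → ℝ) (hr : Monotone r) (F : ℝ → ℝ)
    (hF : ∀ i : Fin n, ∀ x ∈ Set.Icc (a i.castSucc) (a i.succ),
      F x = F (a i.castSucc) + r i * (x - a i.castSucc))
    (c1 c2 c3 s1 s2 : ℝ) (hc12 : c1 < c2) (hc23 : c2 < c3) (hs : s2 < s1)
    (G1 G2 : ℝ → ℝ)
    (hG1 : ∀ x, G1 x = G1 c1 + s1 * (x - c1))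
    (hG2 : ∀ x, G2 x = G2 c2 + s2 * (x - c2))
    (hglue : G1 c2 = G2 c2)
    (hS1 : ∃ i : Fin n, s1 ≤ r i) (hS2 : ∃ i : Fin n, s2 ≤ r i) :
    let f : ℝ → EReal := fun x =>
      if x ∈ Set.Icc (a 0) (a (Fin.last n)) then (F x : EReal) else ⊤
    let g1 : ℝ → EReal := fun x => if x ∈ Set.Icc c1 c2 then (G1 x : EReal) else ⊤
    let g2 : ℝ → EReal := fun x => if x ∈ Set.Icc c2 c3 then (G2 x : EReal) else ⊤
    let conv : (ℝ → EReal) → ℝ → EReal := fun g x => ⨅ y : ℝ, f y + g (x - y)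
    let α1 : ℝ := sInf {x | ∃ i : Fin n, x = a i.castSucc ∧ s1 ≤ r i}
    let α2 : ℝ := sInf {x | ∃ i : Fin n, x = a i.castSucc ∧ s2 ≤ r i}
    (∀ x : ℝ, x ≤ c2 + α2 → conv g1 x ≤ conv g2 x) ∧
      (∀ x : ℝ, c2 + α1 ≤ x → conv g2 x ≤ conv g1 x) := by
  classical
  intro f g1 g2 conv α1 α2
  -- minimal indices realizing the infima
  have key : ∀ (s : ℝ), (∃ i : Fin n, s ≤ r i) → ∃ i₀ : Fin n, s ≤ r i₀ ∧
      (∀ i : Fin n, s ≤ r i → i₀ ≤ i) ∧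
      sInf {x | ∃ i : Fin n, x = a i.castSucc ∧ s ≤ r i} = a i₀.castSucc := by
    intro s hS
    obtain ⟨i, hi⟩ := hS
    set S : Finset (Fin n) := Finset.univ.filter (fun i => s ≤ r i) with hSdef
    have hSne : S.Nonempty := ⟨i, by simp [hSdef, hi]⟩
    refine ⟨S.min' hSne, ?_, ?_, ?_⟩
    · have := S.min'_mem hSne
      simpa [hSdef] using this
    · intro i' hi'
      exact S.min'_le i' (by simp [hSdef, hi'])
    · refine IsLeast.csInf_eq ⟨⟨S.min' hSne, rfl, by
        have := S.min'_mem hSne; simpa [hSdef] using this⟩, ?_⟩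
      rintro x ⟨i', rfl, hi'⟩
      exact ha.monotone (Fin.castSucc_le_castSucc_iff.mpr (S.min'_le i' (by simp [hSdef, hi'])))
  obtain ⟨i₁, hi₁, hmin₁, hα1⟩ := key s1 hS1
  obtain ⟨i₂, hi₂, hmin₂, hα2⟩ := key s2 hS2
  have hA1 : α1 = a i₁.castSucc := hα1
  have hA2 : α2 = a i₂.castSucc := hα2
  have hfnb : ∀ y : ℝ, f y ≠ ⊥ := by
    intro y; simp only [f]; split <;> simp
  have hg1nb : ∀ y : ℝ, g1 y ≠ ⊥ := by
    intro y; simp only [g1]; split <;> simp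
  have hg2nb : ∀ y : ℝ, g2 y ≠ ⊥ := by
    intro y; simp only [g2]; split <;> simp
  constructor
  · -- x ≤ c2 + α2 : conv g1 x ≤ conv g2 x
    intro x hx
    refine le_iInf fun y => ?_
    by_cases hy : y ∈ Set.Icc (a 0) (a (Fin.last n))
    · by_cases hxy : x - y ∈ Set.Icc c2 c3
      · -- main case
        set y' : ℝ := x - c2 with hy'def
        have hyy' : y ≤ y' := by have := hxy.1; simp only [hy'def]; linarith
        have hy'α : y' ≤ α2 := by simp only [hy'def]; linarith
        have hy'mem : y' ∈ Set.Icc (a 0) (a (Fin.last n)) := by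
          refine ⟨le_trans hy.1 hyy', ?_⟩
          rw [hA2] at hy'α
          exact le_trans hy'α (ha.monotone (Fin.le_last _))
        have hc2mem : c2 ∈ Set.Icc c1 c2 := ⟨le_of_lt hc12, le_refl _⟩
        -- monotonicity of s2 * t - F t on [a 0, α2]
        have hmono : MonotoneOn (fun t => s2 * t - F t) (Set.Icc (a 0) (a i₂.castSucc)) := by
          refine monoOn_pieces_aux a ha _ 0 i₂.castSucc (Fin.zero_le _) ?_
          intro i _ hik
          have hilt : (i : ℕ) < (i₂ : ℕ) := by
            have := Fin.le_def.mp hik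
            simp [Fin.val_succ] at this; omega
          have hri : r i ≤ s2 := by
            by_contra h
            exact absurd (Fin.le_def.mp (hmin₂ i (le_of_not_ge h))) (by omega)
          intro u hu v hv huv
          show s2 * u - F u ≤ s2 * v - F v
          rw [hF i u hu, hF i v hv]
          nlinarith [mul_le_mul_of_nonneg_right hri (sub_nonneg.mpr huv)]
        have hymem2 : y ∈ Set.Icc (a 0) (a i₂.castSucc) := ⟨hy.1, by
          rw [hA2] at hy'α; linarith⟩
        have hy'mem2 : y' ∈ Set.Icc (a 0) (a i₂.castSucc) := ⟨le_trans hy.1 hyy', by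
          rw [hA2] at hy'α; linarith⟩
        have hFineq : F y' ≤ F y + s2 * (y' - y) := by
          have h : s2 * y - F y ≤ s2 * y' - F y' := hmono hymem2 hy'mem2 hyy'
          linarith
        have hreal : F y' + G1 c2 ≤ F y + G2 (x - y) := by
          rw [hG2 (x - y), hglue]
          have hy2 : s2 * (x - y - c2) = s2 * (y' - y) := by rw [hy'def]; ring
          linarith [hFineq]
        calc conv g1 x ≤ f y' + g1 (x - y') := iInf_le _ y'
          _ = ((F y' + G1 c2 : ℝ) : EReal) := by
              have hxc : x - y' = c2 := by simp [hy'def]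
              simp only [f, g1, hxc, if_pos hy'mem, if_pos hc2mem]
              norm_cast
          _ ≤ ((F y + G2 (x - y) : ℝ) : EReal) := EReal.coe_le_coe_iff.mpr hreal
          _ = f y + g2 (x - y) := by
              simp only [f, g2, if_pos hy, if_pos hxy]
              norm_cast
      · have : g2 (x - y) = ⊤ := by simp only [g2, if_neg hxy]
        rw [this, EReal.add_top_of_ne_bot (hfnb y)]
        exact le_top
    · have : f y = ⊤ := by simp only [f, if_neg hy]
      rw [this, EReal.top_add_of_ne_bot (hg2nb _)]
      exact le_top
  · -- c2 + α1 ≤ x : conv g2 x ≤ conv g1 x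
    intro x hx
    refine le_iInf fun y => ?_
    by_cases hy : y ∈ Set.Icc (a 0) (a (Fin.last n))
    · by_cases hxy : x - y ∈ Set.Icc c1 c2
      · set y' : ℝ := x - c2 with hy'def
        have hyy' : y' ≤ y := by have := hxy.2; simp only [hy'def]; linarith
        have hαy' : α1 ≤ y' := by simp only [hy'def]; linarith
        have hy'mem : y' ∈ Set.Icc (a 0) (a (Fin.last n)) := by
          refine ⟨?_, le_trans hyy' hy.2⟩
          rw [hA1] at hαy'
          exact le_trans (ha.monotone (Fin.zero_le _)) hαy'
        have hc2mem : c2 ∈ Set.Icc c2 c3 := ⟨le_refl _, le_of_lt hc23⟩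
        -- monotonicity of F t - s1 * t on [α1, a (last n)]
        have hmono : MonotoneOn (fun t => F t - s1 * t)
            (Set.Icc (a i₁.castSucc) (a (Fin.last n))) := by
          refine monoOn_pieces_aux a ha _ i₁.castSucc (Fin.last n) (Fin.le_last _) ?_
          intro i hik _
          have hile : (i₁ : ℕ) ≤ (i : ℕ) := by
            have := Fin.le_def.mp hik; simpa using this
          have hri : s1 ≤ r i := le_trans hi₁ (hr (Fin.le_def.mpr hile))
          intro u hu v hv huv
          show F u - s1 * u ≤ F v - s1 * v
          rw [hF i u hu, hF i v hv]
          nlinarith [mul_le_mul_of_nonneg_right hri (sub_nonneg.mpr huv)]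
        have hymem2 : y ∈ Set.Icc (a i₁.castSucc) (a (Fin.last n)) := ⟨by
          rw [hA1] at hαy'; linarith, hy.2⟩
        have hy'mem2 : y' ∈ Set.Icc (a i₁.castSucc) (a (Fin.last n)) := ⟨by
          rw [hA1] at hαy'; linarith, le_trans hyy' hy.2⟩
        have hFineq : F y' ≤ F y + s1 * (y' - y) := by
          have h : F y' - s1 * y' ≤ F y - s1 * y := hmono hy'mem2 hymem2 hyy'
          linarith
        have hreal : F y' + G2 c2 ≤ F y + G1 (x - y) := by
          have e1 : G1 (x - y) = G1 c1 + s1 * (x - y - c1) := hG1 (x - y)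
          have e2 : G1 c2 = G1 c1 + s1 * (c2 - c1) := hG1 c2
          have e3 : G1 (x - y) = G1 c2 + s1 * (x - y - c2) := by rw [e1, e2]; ring
          rw [e3, ← hglue]
          have hy2 : s1 * (x - y - c2) = s1 * (y' - y) := by rw [hy'def]; ring
          linarith [hFineq]
        calc conv g2 x ≤ f y' + g2 (x - y') := iInf_le _ y'
          _ = ((F y' + G2 c2 : ℝ) : EReal) := by
              have hxc : x - y' = c2 := by simp [hy'def]
              simp only [f, g2, hxc, if_pos hy'mem, if_pos hc2mem]
              norm_cast
          _ ≤ ((F y + G1 (x - y) : ℝ) : EReal) := EReal.coe_le_coe_iff.mpr hreal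
          _ = f y + g1 (x - y) := by
              simp only [f, g1, if_pos hy, if_pos hxy]
              norm_cast
      · have : g1 (x - y) = ⊤ := by simp only [g1, if_neg hxy]
        rw [this, EReal.add_top_of_ne_bot (hfnb y)]
        exact le_top
    · have : f y = ⊤ := by simp only [f, if_neg hy]
      rw [this, EReal.top_add_of_ne_bot (hg1nb _)]
      exact le_top
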